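/- arXiv:2011.08253 — 2 statements merged into one kernel-verified Lean document; each statement's English description precedes it below -/
import Mathlib

section
/- If a learner a is entangled with any learner b, then a is entangled with itself (i.e., a is accurate). -/
theorem entangled_implies_accurate
    {Acceptor Learner : Type}
    (E : Learner → Learner → Set (Set Acceptor))
    (hundirected : ∀ a b : Learner, E a b = E b a)
    (hcondensed : ∀ a b c : Learner, E a b ∩ E b c ⊆ E a c)
    (S : Set Acceptor) (a b : Learner)
    (h : S ∈ E a b) :
    S ∈ E a a := by
  exact hcondensed a b a ⟨h, (hundirected a b) ▸ h⟩
end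

section
/- Two decisions in the same ballot have equal values: if Decision_a(q_a), Decision_b(q_b), and B(q_a) = B(q_b), then V(q_a) = V(q_b). -/
theorem same_ballot_decisions_same_value
    {Message Value Learner Acceptor : Type}
    (is1a is2a : Message → Prop)
    (tran : Message → Set Message)
    (sig : Message → Acceptor) (lrn : Message → Learner)
    (ballot : Message → ℕ) (value : Message → Value)
    (Q : Learner → Set (Set Acceptor))
    (get1a : Message → Message)
    (hget1a : ∀ x : Message, (∃ m ∈ tran x, is1a m) →
      is1a (get1a x) ∧ get1a x ∈ tran x ∧
      ∀ m ∈ tran x, is1a m → ballot m ≤ ballot (get1a x))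
    (hsome1a : ∀ m : Message, ∃ m' ∈ tran m, is1a m')
    -- each 1a has a unique ballot number
    (hunique : ∀ m m' : Message, is1a m → is1a m' → ballot m = ballot m' → m = m')
    (B : Message → ℕ) (hB : ∀ m : Message, B m = ballot (get1a m))
    (V : Message → Value) (hV : ∀ m : Message, V m = value (get1a m))
    (a b : Learner) (qa qb : Set Message)
    (hdeca : qa.Nonempty ∧ (∀ m ∈ qa, is2a m ∧ lrn m = a) ∧
      (∀ m ∈ qa, ∀ m' ∈ qa, B m = B m') ∧ sig '' qa ∈ Q a)
    (hdecb : qb.Nonempty ∧ (∀ m ∈ qb, is2a m ∧ lrn m = b) ∧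
      (∀ m ∈ qb, ∀ m' ∈ qb, B m = B m') ∧ sig '' qb ∈ Q b)
    -- the two decisions share a ballot: B(q_a) = B(q_b)
    (hballots : ∀ m ∈ qa, ∀ m' ∈ qb, B m = B m') :
    ∀ m ∈ qa, ∀ m' ∈ qb, V m = V m' := by
  intro m hm m' hm'
  have h1 := hget1a m (hsome1a m)
  have h2 := hget1a m' (hsome1a m')
  have hb : ballot (get1a m) = ballot (get1a m') := by
    have := hballots m hm m' hm'; rwa [hB, hB] at this
  have : get1a m = get1a m' := hunique _ _ h1.1 h2.1 hb
  rw [hV, hV, this]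
end
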